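/- Let M ∈ ℝ^{n×n} be symmetric positive definite, K ∈ ℝ^{n×n} arbitrary, let B ∈ ℝ^{m×n} have full row rank m with m ≤ n, and let C ∈ ℝ^{n×(n−m)} satisfy B·C = 0 and rank C = n − m. Define C₂ := −(B M⁻¹ Bᵀ)⁻¹·B·M⁻¹·K·C ∈ ℝ^{m×(n−m)}, the stacked matrix T₂ := [C; C₂] ∈ ℝ^{(n+m)×(n−m)}, and Â₂ := [[B, 0], [B M⁻¹ K, B M⁻¹ Bᵀ]] ∈ ℝ^{2m×(n+m)}. Then Â₂·T₂ = 0, rank T₂ = n − m, and the column space of T₂ equals the kernel of the linear map x ↦ Â₂·x on ℝ^{n+m}. -/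

import Mathlib

open Matrix Module

lemma ker_eq_bot_of_rank_eq_cols {k l : ℕ} (A : Matrix (Fin k) (Fin l) ℝ)
    (h : A.rank = l) : LinearMap.ker A.mulVecLin = ⊥ := by
  have h2 := A.mulVecLin.finrank_range_add_finrank_ker
  rw [show finrank ℝ (Fin l → ℝ) = l from Module.finrank_fin_fun ℝ] at h2
  rw [Matrix.rank] at h
  rw [h] at h2
  exact Submodule.finrank_eq_zero.mp (by omega)

lemma range_eq_ker_full {k l d : ℕ} (B : Matrix (Fin k) (Fin l) ℝ)
    (C : Matrix (Fin l) (Fin d) ℝ) (hBC : B * C = 0) (hB : B.rank = k)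
    (hC : C.rank = d) (hd : d = l - k) (hkl : k ≤ l) :
    LinearMap.range C.mulVecLin = LinearMap.ker B.mulVecLin := by
  apply Submodule.eq_of_le_of_finrank_eq
  · rintro x ⟨v, rfl⟩
    simp only [LinearMap.mem_ker, Matrix.mulVecLin_apply]
    rw [Matrix.mulVec_mulVec, hBC, Matrix.zero_mulVec]
  · have h1 := B.mulVecLin.finrank_range_add_finrank_ker
    rw [show finrank ℝ (Fin l → ℝ) = l from Module.finrank_fin_fun ℝ] at h1
    rw [show finrank ℝ (LinearMap.range B.mulVecLin) = k from hB] at h1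
    rw [show finrank ℝ (LinearMap.range C.mulVecLin) = d from hC]
    omega

lemma S_posdef {k l : ℕ} (Mi : Matrix (Fin l) (Fin l) ℝ) (hMi : Mi.PosDef)
    (B : Matrix (Fin k) (Fin l) ℝ) (hB : B.rank = k) :
    (B * Mi * Bᵀ).PosDef := by
  have hsemi : (B * Mi * Bᵀ).PosSemidef := by
    have := hMi.posSemidef.mul_mul_conjTranspose_same B
    simpa using this
  refine posDef_iff_dotProduct_mulVec.mpr ⟨hsemi.1, fun x hx => ?_⟩
  have hy : Bᵀ *ᵥ x ≠ 0 := by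
    have hker := ker_eq_bot_of_rank_eq_cols Bᵀ (by rw [Matrix.rank_transpose, hB])
    intro h
    have : x ∈ LinearMap.ker Bᵀ.mulVecLin := by simpa [Matrix.mulVec_transpose] using h
    rw [hker] at this
    exact hx (by simpa using this)
  have := hMi.dotProduct_mulVec_pos hy
  calc (0:ℝ) < star (Bᵀ *ᵥ x) ⬝ᵥ Mi *ᵥ (Bᵀ *ᵥ x) := this
    _ = star x ⬝ᵥ (B * Mi * Bᵀ) *ᵥ x := by
        simp only [star_trivial, ← Matrix.mulVec_mulVec, Matrix.mulVec_transpose,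
          Matrix.dotProduct_mulVec, Matrix.vecMul_vecMul]

/-- With `C` a full-column-rank kernel matrix of `B` and
`C₂ = -(B M⁻¹ Bᵀ)⁻¹ B M⁻¹ K C`, the stacked matrix `T₂ = [C; C₂]` satisfies `Â₂ T₂ = 0`,
has rank `n - m`, and its column space equals the kernel of `Â₂`, where
`Â₂ = [[B, 0], [B M⁻¹ K, B M⁻¹ Bᵀ]]`. -/
theorem T2_parametrizes_kernel (n m : ℕ) (hmn : m ≤ n)
    (M K : Matrix (Fin n) (Fin n) ℝ) (hM : M.PosDef)
    (B : Matrix (Fin m) (Fin n) ℝ) (hB : B.rank = m)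
    (C : Matrix (Fin n) (Fin (n - m)) ℝ) (hBC : B * C = 0) (hC : C.rank = n - m) :
    fromBlocks B (0 : Matrix (Fin m) (Fin m) ℝ) (B * M⁻¹ * K) (B * M⁻¹ * Bᵀ) *
        fromRows C (-((B * M⁻¹ * Bᵀ)⁻¹ * (B * M⁻¹ * K * C))) = 0 ∧
    (fromRows C (-((B * M⁻¹ * Bᵀ)⁻¹ * (B * M⁻¹ * K * C)))).rank = n - m ∧
    LinearMap.range
        (fromRows C (-((B * M⁻¹ * Bᵀ)⁻¹ * (B * M⁻¹ * K * C)))).mulVecLin =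
      LinearMap.ker
        (fromBlocks B (0 : Matrix (Fin m) (Fin m) ℝ)
          (B * M⁻¹ * K) (B * M⁻¹ * Bᵀ)).mulVecLin := by
  have hMi : M⁻¹.PosDef := hM.inv
  set S := B * M⁻¹ * Bᵀ with hSdef
  have hS : S.PosDef := S_posdef M⁻¹ hMi B hB
  have hSdet : IsUnit S.det := isUnit_iff_ne_zero.mpr (ne_of_gt hS.det_pos)
  have hSinv : S * S⁻¹ = 1 := Matrix.mul_nonsing_inv S hSdet
  set C₂ := -((B * M⁻¹ * Bᵀ)⁻¹ * (B * M⁻¹ * K * C)) with hC₂def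
  have h1 : fromBlocks B (0 : Matrix (Fin m) (Fin m) ℝ) (B * M⁻¹ * K) S *
      fromRows C C₂ = 0 := by
    rw [fromBlocks_mul_fromRows]
    have htop : B * C + (0 : Matrix (Fin m) (Fin m) ℝ) * C₂ = 0 := by
      rw [hBC, Matrix.zero_mul, add_zero]
    have hbot : B * M⁻¹ * K * C + S * C₂ = 0 := by
      rw [hC₂def, ← hSdef, Matrix.mul_neg, ← Matrix.mul_assoc, hSinv, Matrix.one_mul,
        add_neg_cancel]
    rw [htop, hbot]
    ext (_ | _) _ <;> simp [fromRows_apply_inl, fromRows_apply_inr]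
  have hkerT : LinearMap.ker (fromRows C C₂).mulVecLin = ⊥ := by
    rw [LinearMap.ker_eq_bot']
    intro w hw
    simp only [Matrix.mulVecLin_apply, fromRows_mulVec] at hw
    have hCw : C *ᵥ w = 0 := by
      funext i; simpa using congrFun hw (Sum.inl i)
    have hker := ker_eq_bot_of_rank_eq_cols C hC
    have hmem : w ∈ LinearMap.ker C.mulVecLin := by simpa using hCw
    rw [hker] at hmem
    simpa using hmem
  have hrank : (fromRows C C₂).rank = n - m := by
    rw [Matrix.rank]
    have h2 := (fromRows C C₂).mulVecLin.finrank_range_add_finrank_ker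
    rw [hkerT, finrank_bot, show finrank ℝ (Fin (n - m) → ℝ) = n - m from
      Module.finrank_fin_fun ℝ] at h2
    omega
  have hrangeC : LinearMap.range C.mulVecLin = LinearMap.ker B.mulVecLin :=
    range_eq_ker_full B C hBC hB hC rfl hmn
  refine ⟨h1, hrank, le_antisymm ?_ ?_⟩
  · rintro x ⟨v, rfl⟩
    simp only [LinearMap.mem_ker, Matrix.mulVecLin_apply]
    rw [Matrix.mulVec_mulVec, h1, Matrix.zero_mulVec]
  · intro x hx
    simp only [LinearMap.mem_ker, Matrix.mulVecLin_apply, fromBlocks_mulVec] at hx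
    have htop : B *ᵥ (x ∘ Sum.inl) + (0 : Matrix (Fin m) (Fin m) ℝ) *ᵥ (x ∘ Sum.inr) = 0 := by
      funext i; exact congrFun hx (Sum.inl i)
    have hbot : (B * M⁻¹ * K) *ᵥ (x ∘ Sum.inl) + S *ᵥ (x ∘ Sum.inr) = 0 := by
      funext i; exact congrFun hx (Sum.inr i)
    rw [Matrix.zero_mulVec, add_zero] at htop
    have hu : x ∘ Sum.inl ∈ LinearMap.range C.mulVecLin := by
      rw [hrangeC]; simpa using htop
    obtain ⟨w, hw⟩ := hu
    simp only [Matrix.mulVecLin_apply] at hw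
    have hSv : S *ᵥ (x ∘ Sum.inr) = -((B * M⁻¹ * K * C) *ᵥ w) := by
      rw [← hw, Matrix.mulVec_mulVec] at hbot
      exact eq_neg_of_add_eq_zero_right hbot
    have hv : x ∘ Sum.inr = C₂ *ᵥ w := by
      have h3 : (S⁻¹ * S) *ᵥ (x ∘ Sum.inr) = S⁻¹ *ᵥ (S *ᵥ (x ∘ Sum.inr)) :=
        (Matrix.mulVec_mulVec _ _ _).symm
      rw [Matrix.nonsing_inv_mul S hSdet, Matrix.one_mulVec, hSv] at h3
      rw [h3, hC₂def, ← hSdef]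
      simp [Matrix.neg_mulVec, Matrix.mulVec_neg, Matrix.mulVec_mulVec]
    refine ⟨w, ?_⟩
    simp only [Matrix.mulVecLin_apply, fromRows_mulVec, hw, ← hv]
    funext i; cases i <;> rfl
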